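/- Let k : [0,1] × [0,∞) → ℝ be continuous, and suppose there is a continuous function K : [0,1] × ℝ → ℝ with K(x₁, x₂+1) = K(x₁, x₂) for all (x₁,x₂), ∫₀¹∫₀¹ K(x₁,x₂) dx₂ dx₁ = 0, and ∫₀¹ ∫₀^∞ |k(x₁,x₂) − K(x₁,x₂)| dx₂ dx₁ < ∞. Then for every g ∈ C¹([0,1]) with g(0) = 1 and g(1) = 0, the limit lim_{L→∞} ∫₀¹ ∫₀^L g(x₂/L) k(x₁,x₂) dx₂ dx₁ exists and equals ∫₀¹ ∫₀^∞ (k(x₁,x₂) − K(x₁,x₂)) dx₂ dx₁ − ∫₀¹ ∫₀¹ x₂ K(x₁,x₂) dx₂ dx₁; in particular the limit is independent of g. -/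

import Mathlib

open MeasureTheory Filter Set intervalIntegral

/-- Antiderivative facts for a continuous function. -/
lemma edge_antideriv {p : ℝ → ℝ} (hp : Continuous p) (t : ℝ) :
    HasDerivAt (fun u => ∫ s in (0:ℝ)..u, p s) (p t) t :=
  intervalIntegral.integral_hasDerivAt_right (hp.intervalIntegrable 0 t)
    hp.stronglyMeasurable.stronglyMeasurableAtFilter hp.continuousAt

lemma edge_antideriv_periodic {p : ℝ → ℝ} (hp : Continuous p)
    (hper : Function.Periodic p 1) (havg : ∫ s in (0:ℝ)..1, p s = 0) :
    Function.Periodic (fun u => ∫ s in (0:ℝ)..u, p s) 1 := by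
  intro t
  have h1 : (∫ s in (0:ℝ)..t, p s) + ∫ s in t..(t+1), p s = ∫ s in (0:ℝ)..(t+1), p s :=
    intervalIntegral.integral_add_adjacent_intervals (μ := volume) (hp.intervalIntegrable 0 t)
      (hp.intervalIntegrable t (t+1))
  have h2 : ∫ s in t..(t+1), p s = ∫ s in (0:ℝ)..(0+1), p s :=
    hper.intervalIntegral_add_eq t 0
  simp only [zero_add] at h2
  simp only [← h1, h2, havg, add_zero]

/-- Bound for a continuous periodic function. -/
lemma edge_periodic_bound {p : ℝ → ℝ} (hp : Continuous p) (hper : Function.Periodic p 1) :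
    ∃ C : ℝ, 0 ≤ C ∧ ∀ t, |p t| ≤ C := by
  obtain ⟨C, hC⟩ := (isBounded_iff_forall_norm_le.mp
    (hper.isBounded_of_continuous one_ne_zero hp))
  exact ⟨max C 0, le_max_right _ _, fun t =>
    le_trans (hC _ (mem_range_self t)) (le_max_left _ _)⟩

/-- Weak convergence to the mean: ∫₀¹ φ(u) p(Lu) du → 0 for periodic zero-mean p. -/
lemma edge_decay {φ p : ℝ → ℝ} (hφ : ContinuousOn φ (Icc 0 1)) (hp : Continuous p)
    (hper : Function.Periodic p 1) (havg : ∫ s in (0:ℝ)..1, p s = 0) :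
    Tendsto (fun L : ℝ => ∫ u in (0:ℝ)..1, φ u * p (L * u)) atTop (nhds 0) := by
  set q : ℝ → ℝ := fun u => ∫ s in (0:ℝ)..u, p s with hq_def
  have hq : ∀ t, HasDerivAt q (p t) t := edge_antideriv hp
  have hq_cont : Continuous q := continuous_iff_continuousAt.mpr fun t => (hq t).continuousAt
  have hq_per : Function.Periodic q 1 := edge_antideriv_periodic hp hper havg
  obtain ⟨C, hC0, hC⟩ := edge_periodic_bound hq_cont hq_per
  obtain ⟨Cp, hCp0, hCp⟩ := edge_periodic_bound hp hper
  rw [NormedAddCommGroup.tendsto_nhds_zero]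
  intro ε hε
  -- Weierstrass approximation of φ
  obtain ⟨ψ, hψ⟩ := exists_polynomial_near_of_continuousOn 0 1 φ hφ
    (ε / (2 * (Cp + 1))) (by positivity)
  -- bound for ψ'
  obtain ⟨D, hD⟩ := IsCompact.exists_bound_of_continuousOn (isCompact_Icc (a := (0:ℝ)) (b := 1))
    ((ψ.derivative.continuous).continuousOn)
  have hD0 : 0 ≤ D := le_trans (abs_nonneg _) (hD 0 (by simp))
  -- Step 1 : the polynomial part tends to 0
  have hstep1 : Tendsto (fun L : ℝ => ∫ u in (0:ℝ)..1, ψ.eval u * p (L * u)) atTop (nhds 0) := by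
    apply squeeze_zero_norm'
      (a := fun L : ℝ => (|ψ.eval 1| * C + D * C) * L⁻¹)
    · filter_upwards [eventually_ge_atTop (1:ℝ)] with L hL
      have hL0 : (0:ℝ) < L := lt_of_lt_of_le one_pos hL
      have hLinv : (0:ℝ) ≤ L⁻¹ := (inv_nonneg).mpr hL0.le
      have hv : ∀ u : ℝ, HasDerivAt (fun w => L⁻¹ * q (L * w)) (p (L * u)) u := by
        intro u
        have h1 : HasDerivAt (fun w : ℝ => L * w) L u := by
          simpa using (hasDerivAt_id u).const_mul L
        have h3 := ((hq (L * u)).comp u h1).const_mul L⁻¹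
        rw [mul_comm (p (L * u)) L, ← mul_assoc, inv_mul_cancel₀ hL0.ne', one_mul] at h3
        exact h3
      have parts := intervalIntegral.integral_mul_deriv_eq_deriv_mul
        (u := fun u => ψ.eval u) (u' := fun u => ψ.derivative.eval u)
        (v := fun w => L⁻¹ * q (L * w)) (v' := fun u => p (L * u)) (a := 0) (b := 1)
        (fun x _ => ψ.hasDerivAt x) (fun x _ => hv x)
        ((ψ.derivative.continuous).intervalIntegrable 0 1)
        ((hp.comp (continuous_const.mul continuous_id)).intervalIntegrable 0 1)
      have hq0 : q (L * 0) = 0 := by simp [hq_def]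
      rw [parts, hq0]
      have hb1 : ‖ψ.eval 1 * (L⁻¹ * q (L * 1))‖ ≤ |ψ.eval 1| * (L⁻¹ * C) := by
        rw [Real.norm_eq_abs, abs_mul, abs_mul]
        gcongr
        · rw [abs_of_nonneg hLinv]
        · exact hC _
      have hb2 : ‖∫ u in (0:ℝ)..1, ψ.derivative.eval u * (L⁻¹ * q (L * u))‖
          ≤ (D * (L⁻¹ * C)) * |1 - 0| := by
        apply intervalIntegral.norm_integral_le_of_norm_le_const
        intro x hx
        have hx' : x ∈ Icc (0:ℝ) 1 := mem_Icc_of_Ioc (by rwa [uIoc_of_le zero_le_one] at hx)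
        rw [Real.norm_eq_abs, abs_mul, abs_mul]
        gcongr
        · exact hD x hx'
        · rw [abs_of_nonneg hLinv]
        · exact hC _
      calc ‖ψ.eval 1 * (L⁻¹ * q (L * 1)) - ψ.eval 0 * (L⁻¹ * 0)
            - ∫ u in (0:ℝ)..1, ψ.derivative.eval u * (L⁻¹ * q (L * u))‖
          ≤ ‖ψ.eval 1 * (L⁻¹ * q (L * 1)) - ψ.eval 0 * (L⁻¹ * 0)‖
            + ‖∫ u in (0:ℝ)..1, ψ.derivative.eval u * (L⁻¹ * q (L * u))‖ := norm_sub_le _ _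
        _ ≤ |ψ.eval 1| * (L⁻¹ * C) + (D * (L⁻¹ * C)) * |1 - 0| := by
            apply add_le_add _ hb2
            simpa using hb1
        _ = (|ψ.eval 1| * C + D * C) * L⁻¹ := by simp; ring
    · have := tendsto_inv_atTop_zero (𝕜 := ℝ)
      simpa using this.const_mul (|ψ.eval 1| * C + D * C)
  -- Step 2 : combine with the approximation
  have hev := (NormedAddCommGroup.tendsto_nhds_zero.mp hstep1) (ε/2) (by positivity)
  filter_upwards [hev] with L hL
  have hpc : Continuous fun u : ℝ => p (L * u) :=
    hp.comp (continuous_const.mul continuous_id)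
  have hI1 : IntervalIntegrable (fun u => (φ u - ψ.eval u) * p (L * u)) volume 0 1 := by
    apply ContinuousOn.intervalIntegrable
    rw [uIcc_of_le zero_le_one]
    exact ((hφ.sub ψ.continuous.continuousOn).mul hpc.continuousOn)
  have hI2 : IntervalIntegrable (fun u => ψ.eval u * p (L * u)) volume 0 1 :=
    (ψ.continuous.mul hpc).intervalIntegrable 0 1
  have split : (∫ u in (0:ℝ)..1, φ u * p (L * u))
      = (∫ u in (0:ℝ)..1, (φ u - ψ.eval u) * p (L * u))
        + ∫ u in (0:ℝ)..1, ψ.eval u * p (L * u) := by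
    rw [← intervalIntegral.integral_add hI1 hI2]
    apply intervalIntegral.integral_congr
    intro x _
    ring
  have hb1 : ‖∫ u in (0:ℝ)..1, (φ u - ψ.eval u) * p (L * u)‖
      ≤ (ε / (2 * (Cp + 1)) * Cp) * |1 - 0| := by
    apply intervalIntegral.norm_integral_le_of_norm_le_const
    intro x hx
    have hx' : x ∈ Icc (0:ℝ) 1 := mem_Icc_of_Ioc (by rwa [uIoc_of_le zero_le_one] at hx)
    rw [Real.norm_eq_abs, abs_mul]
    apply mul_le_mul _ (hCp _) (abs_nonneg _) (by positivity)
    rw [abs_sub_comm]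
    exact (hψ x hx').le
  have hfinal : ε / (2 * (Cp + 1)) * Cp ≤ ε / 2 := by
    rw [div_mul_eq_mul_div, div_le_div_iff₀ (by positivity) two_pos]
    nlinarith [hε.le, hCp0]
  calc ‖∫ u in (0:ℝ)..1, φ u * p (L * u)‖
      ≤ ‖∫ u in (0:ℝ)..1, (φ u - ψ.eval u) * p (L * u)‖
        + ‖∫ u in (0:ℝ)..1, ψ.eval u * p (L * u)‖ := by rw [split]; exact norm_add_le _ _
    _ < (ε / (2 * (Cp + 1)) * Cp) * |1 - 0| + ε/2 := by
        exact add_lt_add_of_le_of_lt hb1 hL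
    _ ≤ ε := by rw [abs_of_nonneg (by norm_num : (0:ℝ) ≤ 1 - 0)]; linarith [hfinal]


/-- The 1D core: regularized integral of a periodic zero-mean profile. -/
lemma edge_core {Q G φ : ℝ → ℝ} (hQ : Continuous Q) (hper : Function.Periodic Q 1)
    (havg : ∫ t in (0:ℝ)..1, Q t = 0) (hφ : Continuous φ)
    (hG : ∀ x, HasDerivAt G (φ x) x) (hG0 : G 0 = 1) (hG1 : G 1 = 0) :
    Tendsto (fun L : ℝ => ∫ t in (0:ℝ)..L, G (t / L) * Q t) atTop
      (nhds (- ∫ t in (0:ℝ)..1, t * Q t)) := by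
  have hGcont : Continuous G := continuous_iff_continuousAt.mpr fun t => (hG t).continuousAt
  set P : ℝ → ℝ := fun u => ∫ s in (0:ℝ)..u, Q s with hP_def
  have hP : ∀ t, HasDerivAt P (Q t) t := edge_antideriv hQ
  have hPcont : Continuous P := continuous_iff_continuousAt.mpr fun t => (hP t).continuousAt
  have hPper : Function.Periodic P 1 := edge_antideriv_periodic hQ hper havg
  have hP0 : P 0 = 0 := by simp [hP_def]
  have hP1 : P 1 = 0 := havg
  set Pbar : ℝ := ∫ t in (0:ℝ)..1, P t with hPbar_def
  have hPbar : (∫ t in (0:ℝ)..1, t * Q t) = -Pbar := by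
    have parts := intervalIntegral.integral_mul_deriv_eq_deriv_mul
      (u := fun t : ℝ => t) (u' := fun _ => (1:ℝ)) (v := P) (v' := Q) (a := 0) (b := 1)
      (fun x _ => hasDerivAt_id x) (fun x _ => hP x)
      (intervalIntegrable_const) (hQ.intervalIntegrable 0 1)
    simp only [hP1, hP0, one_mul, mul_zero, zero_mul, sub_zero, zero_sub, mul_one] at parts
    exact parts
  -- the fluctuation
  set p : ℝ → ℝ := fun t => P t - Pbar with hp_def
  have hp_cont : Continuous p := hPcont.sub continuous_const
  have hp_per : Function.Periodic p 1 := fun t => by simp [hp_def, hPper t]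
  have hp_avg : ∫ s in (0:ℝ)..1, p s = 0 := by
    rw [hp_def]
    rw [intervalIntegral.integral_sub (hPcont.intervalIntegrable 0 1) intervalIntegrable_const]
    simp [hPbar_def]
  have hdec := edge_decay (φ := φ) hφ.continuousOn hp_cont hp_per hp_avg
  have hφint : (∫ u in (0:ℝ)..1, φ u) = -1 := by
    rw [intervalIntegral.integral_eq_sub_of_hasDerivAt (fun x _ => hG x)
      (hφ.intervalIntegrable 0 1), hG1, hG0]
    norm_num
  -- eventual identity
  have hkey : ∀ᶠ L in (atTop : Filter ℝ),
      (∫ t in (0:ℝ)..L, G (t / L) * Q t) = Pbar - ∫ u in (0:ℝ)..1, φ u * p (L * u) := by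
    filter_upwards [eventually_ge_atTop (1:ℝ)] with L hL
    have hL0 : (0:ℝ) < L := lt_of_lt_of_le one_pos hL
    have hu : ∀ t : ℝ, HasDerivAt (fun w => G (w / L)) (φ (t / L) * (1 / L)) t := fun t =>
      (hG (t / L)).comp t ((hasDerivAt_id t).div_const L)
    have hu'c : Continuous fun t : ℝ => φ (t / L) * (1 / L) :=
      (hφ.comp (continuous_id.div_const L)).mul continuous_const
    have parts := intervalIntegral.integral_mul_deriv_eq_deriv_mul
      (u := fun t : ℝ => G (t / L)) (u' := fun t => φ (t / L) * (1 / L))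
      (v := P) (v' := Q) (a := 0) (b := L)
      (fun x _ => hu x) (fun x _ => hP x)
      (hu'c.intervalIntegrable 0 L) (hQ.intervalIntegrable 0 L)
    rw [div_self hL0.ne', zero_div, hG1, hG0, hP0] at parts
    simp only [zero_mul, mul_zero, sub_zero, zero_sub] at parts
    rw [parts]
    -- change of variables
    have cov := intervalIntegral.integral_comp_mul_left
      (a := (0:ℝ)) (b := 1) (f := fun t => φ (t / L) * (1 / L) * P t) (c := L) hL0.ne'
    simp only [mul_zero, mul_one, smul_eq_mul] at cov
    have hcongr : (∫ x in (0:ℝ)..1, φ (L * x / L) * (1 / L) * P (L * x))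
        = ∫ x in (0:ℝ)..1, (1 / L) * (φ x * P (L * x)) := by
      apply intervalIntegral.integral_congr
      intro x _
      simp only
      rw [mul_div_cancel_left₀ x hL0.ne']
      ring
    rw [hcongr, intervalIntegral.integral_const_mul] at cov
    have step : (∫ t in (0:ℝ)..L, φ (t / L) * (1 / L) * P t)
        = ∫ x in (0:ℝ)..1, φ x * P (L * x) := by
      rw [one_div] at cov
      have h2 := (mul_left_cancel₀ (inv_ne_zero hL0.ne') cov).symm
      simpa [one_div] using h2
    rw [step]
    have hPsplit : (∫ x in (0:ℝ)..1, φ x * P (L * x))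
        = Pbar * (∫ u in (0:ℝ)..1, φ u) + ∫ u in (0:ℝ)..1, φ u * p (L * u) := by
      have hi1 : IntervalIntegrable (fun x => Pbar * φ x) volume 0 1 :=
        (continuous_const.mul hφ).intervalIntegrable 0 1
      have hi2 : IntervalIntegrable (fun u => φ u * p (L * u)) volume 0 1 :=
        (hφ.mul (hp_cont.comp (continuous_const.mul continuous_id))).intervalIntegrable 0 1
      rw [← intervalIntegral.integral_const_mul, ← intervalIntegral.integral_add hi1 hi2]
      apply intervalIntegral.integral_congr
      intro x _
      simp only [hp_def]
      ring
    rw [hPsplit, hφint]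
    ring
  rw [hPbar, neg_neg]
  apply Tendsto.congr' (EventuallyEq.symm hkey)
  simpa using tendsto_const_nhds.sub hdec

/-- Extend a `C¹` function on `[0,1]` to a `C¹` function on `ℝ`. -/
lemma edge_extend {g : ℝ → ℝ} (hg : ContDiffOn ℝ 1 g (Icc 0 1)) :
    ∃ G φ : ℝ → ℝ, Continuous φ ∧ (∀ x, HasDerivAt G (φ x) x) ∧ EqOn G g (Icc 0 1) := by
  set d := derivWithin g (Icc (0:ℝ) 1) with hd_def
  have hdcont : ContinuousOn d (Icc 0 1) :=
    hg.continuousOn_derivWithin (uniqueDiffOn_Icc one_pos) le_rfl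
  set φ : ℝ → ℝ := fun t => d ((Set.projIcc (0:ℝ) 1 zero_le_one t : Icc (0:ℝ) 1) : ℝ)
    with hφ_def
  have hφ : Continuous φ := hdcont.comp_continuous
    (continuous_subtype_val.comp continuous_projIcc)
    (fun x => (Set.projIcc (0:ℝ) 1 zero_le_one x).2)
  refine ⟨fun x => g 0 + ∫ t in (0:ℝ)..x, φ t, φ, hφ, ?_, ?_⟩
  · exact fun x => (edge_antideriv hφ x).const_add (g 0)
  · intro x hx
    have hint : (∫ t in (0:ℝ)..x, φ t) = g x - g 0 := by
      apply intervalIntegral.integral_eq_sub_of_hasDeriv_right_of_le hx.1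
      · exact hg.continuousOn.mono (Icc_subset_Icc le_rfl hx.2)
      · intro t ht
        have ht' : t ∈ Icc (0:ℝ) 1 := ⟨ht.1.le, le_trans ht.2.le hx.2⟩
        have hmem : Icc (0:ℝ) 1 ∈ nhds t :=
          Icc_mem_nhds ht.1 (lt_of_lt_of_le ht.2 hx.2)
        have hda : HasDerivAt g (d t) t :=
          (((hg.differentiableOn one_ne_zero) t ht').hasDerivWithinAt).hasDerivAt hmem
        have hφt : φ t = d t := by
          simp [hφ_def, Set.projIcc_of_mem zero_le_one ht']
        rw [hφt]
        exact hda.hasDerivWithinAt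
      · exact hφ.intervalIntegrable 0 x
    simp [hint]

/-- Fubini swap for integrable functions on products of `Ioc` intervals. -/
lemma edge_swap {f : ℝ → ℝ → ℝ} {a b c d : ℝ}
    (hf : IntegrableOn (fun p : ℝ × ℝ => f p.1 p.2) (Ioc a b ×ˢ Ioc c d)
      ((volume : Measure ℝ).prod volume)) :
    (∫ x in Ioc a b, ∫ y in Ioc c d, f x y) = ∫ y in Ioc c d, ∫ x in Ioc a b, f x y := by
  apply MeasureTheory.integral_integral_swap
  rw [Measure.prod_restrict]
  exact hf

/-- **The total edge current is well defined and independent of the cutoff.**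
If `k` is the continuous edge current density profile on `[0,1] × [0,∞)` and `K` a
continuous periodic bulk profile with vanishing unit-cell average such that `k − K` is
integrable on the semi-infinite strip, then for every `g ∈ C¹([0,1])` with `g 0 = 1`,
`g 1 = 0`, the regularized integrals `∫₀¹∫₀ᴸ g(x₂/L) k(x₁,x₂) dx₂ dx₁` converge, as
`L → ∞`, to `∫₀¹∫₀^∞ (k − K) − ∫₀¹∫₀¹ x₂ K(x₁,x₂) dx₂ dx₁`, independently of `g`. -/
theorem total_edge_current_well_defined
    (k : ℝ × ℝ → ℝ) (hk : ContinuousOn k ((Set.Icc (0:ℝ) 1) ×ˢ (Set.Ici (0:ℝ))))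
    (K : ℝ × ℝ → ℝ) (hK : Continuous K)
    (hKper : ∀ x₁ x₂ : ℝ, K (x₁, x₂ + 1) = K (x₁, x₂))
    (hKavg : (∫ x₁ in (0:ℝ)..1, ∫ x₂ in (0:ℝ)..1, K (x₁, x₂)) = 0)
    (hint : IntegrableOn (fun p : ℝ × ℝ => k p - K p)
      ((Set.Icc (0:ℝ) 1) ×ˢ (Set.Ici (0:ℝ))))
    (g : ℝ → ℝ) (hg : ContDiffOn ℝ 1 g (Set.Icc (0:ℝ) 1))
    (hg0 : g 0 = 1) (hg1 : g 1 = 0) :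
    Tendsto (fun L : ℝ => ∫ x₁ in (0:ℝ)..1, ∫ x₂ in (0:ℝ)..L, g (x₂ / L) * k (x₁, x₂))
      atTop
      (nhds ((∫ x₁ in (0:ℝ)..1, ∫ x₂ in Set.Ioi (0:ℝ), (k (x₁, x₂) - K (x₁, x₂)))
        - ∫ x₁ in (0:ℝ)..1, ∫ x₂ in (0:ℝ)..1, x₂ * K (x₁, x₂))) := by
  obtain ⟨G, φ, hφc, hGd, hGeq⟩ := edge_extend hg
  have hGcont : Continuous G := continuous_iff_continuousAt.mpr fun t => (hGd t).continuousAt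
  have hG0 : G 0 = 1 := by rw [hGeq ⟨le_rfl, zero_le_one⟩, hg0]
  have hG1 : G 1 = 0 := by rw [hGeq ⟨zero_le_one, le_rfl⟩, hg1]
  obtain ⟨M, hM0, hM⟩ : ∃ M : ℝ, 0 ≤ M ∧ ∀ x ∈ Icc (0:ℝ) 1, |G x| ≤ M := by
    obtain ⟨C, hC⟩ := (isCompact_Icc (a := (0:ℝ)) (b := 1)).exists_bound_of_continuousOn
      hGcont.continuousOn
    exact ⟨max C 0, le_max_right _ _, fun x hx => le_trans (hC x hx) (le_max_left _ _)⟩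
  have hGmem : ∀ {y L : ℝ}, y ∈ Ioc 0 L → |G (y / L)| ≤ M := by
    intro y L hy
    have hL0 : (0:ℝ) < L := lt_of_lt_of_le hy.1 hy.2
    exact hM _ ⟨div_nonneg hy.1.le hL0.le, (div_le_one hL0).mpr hy.2⟩
  -- the averaged bulk profile
  set Q : ℝ → ℝ := fun t => ∫ x₁ in (0:ℝ)..1, K (x₁, t) with hQ_def
  have hQc : Continuous Q := by
    exact intervalIntegral.continuous_parametric_intervalIntegral_of_continuous'
      (f := fun t s => K (s, t)) (hK.comp continuous_swap) 0 1
  have hQper : Function.Periodic Q 1 := fun t => by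
    simp only [hQ_def, hKper]
  have hQIoc : ∀ t, Q t = ∫ x₁ in Ioc (0:ℝ) 1, K (x₁, t) := fun t =>
    intervalIntegral.integral_of_le zero_le_one
  -- integrability of continuous functions on Ioc-boxes
  have hbox : ∀ (F : ℝ × ℝ → ℝ), Continuous F → ∀ a b c d : ℝ,
      IntegrableOn F (Ioc a b ×ˢ Ioc c d) ((volume : Measure ℝ).prod volume) := by
    intro F hF a b c d
    exact ((hF.continuousOn).integrableOn_compact
      (isCompact_Icc.prod isCompact_Icc)).mono_set
      (prod_mono Ioc_subset_Icc_self Ioc_subset_Icc_self)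
  -- vanishing average of Q
  have hQavg : (∫ t in (0:ℝ)..1, Q t) = 0 := by
    have hFi := hbox K hK 0 1 0 1
    have hs := edge_swap (f := fun x₁ x₂ => K (x₁, x₂)) hFi
    rw [intervalIntegral.integral_of_le zero_le_one]
    calc (∫ t in Ioc (0:ℝ) 1, Q t) = ∫ t in Ioc (0:ℝ) 1, ∫ x₁ in Ioc (0:ℝ) 1, K (x₁, t) := by
          apply setIntegral_congr_fun measurableSet_Ioc
          intro t _
          exact hQIoc t
      _ = ∫ x₁ in Ioc (0:ℝ) 1, ∫ x₂ in Ioc (0:ℝ) 1, K (x₁, x₂) := hs.symm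
      _ = (∫ x₁ in (0:ℝ)..1, ∫ x₂ in (0:ℝ)..1, K (x₁, x₂)) := by
          simp only [intervalIntegral.integral_of_le zero_le_one]
      _ = 0 := hKavg
  -- second target term
  have hT2 : (∫ x₁ in (0:ℝ)..1, ∫ x₂ in (0:ℝ)..1, x₂ * K (x₁, x₂))
      = ∫ t in (0:ℝ)..1, t * Q t := by
    have hFi := hbox (fun p => p.2 * K p) (continuous_snd.mul hK) 0 1 0 1
    have hs := edge_swap (f := fun x₁ x₂ => x₂ * K (x₁, x₂)) hFi
    simp only [intervalIntegral.integral_of_le zero_le_one]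
    rw [hs]
    apply setIntegral_congr_fun measurableSet_Ioc
    intro t _
    simp only
    rw [hQIoc t, ← MeasureTheory.integral_const_mul]
  -- the K-part of the regularized integral, reduced to one dimension
  have hKpart : ∀ L : ℝ, 0 < L →
      (∫ x₁ in (0:ℝ)..1, ∫ x₂ in (0:ℝ)..L, G (x₂ / L) * K (x₁, x₂))
        = ∫ t in (0:ℝ)..L, G (t / L) * Q t := by
    intro L hL0
    have hFi := hbox (fun p => G (p.2 / L) * K p)
      ((hGcont.comp (continuous_snd.div_const L)).mul hK) 0 1 0 L
    have hs := edge_swap (f := fun x₁ x₂ => G (x₂ / L) * K (x₁, x₂)) hFi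
    simp only [intervalIntegral.integral_of_le zero_le_one,
      intervalIntegral.integral_of_le hL0.le]
    rw [hs]
    apply setIntegral_congr_fun measurableSet_Ioc
    intro t _
    simp only
    rw [hQIoc t, ← MeasureTheory.integral_const_mul]
  -- the (k - K) part : dominated convergence on the strip
  set S : Set (ℝ × ℝ) := Ioc 0 1 ×ˢ Ioi 0 with hS_def
  set dd : ℝ × ℝ → ℝ := fun p => k p - K p with hdd_def
  have hSsub : S ⊆ Icc 0 1 ×ˢ Ici 0 := prod_mono Ioc_subset_Icc_self Ioi_subset_Ici_self
  have hSmeas : MeasurableSet S := (measurableSet_Ioc.prod measurableSet_Ioi)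
  have hdS : IntegrableOn dd S ((volume : Measure ℝ).prod volume) := by
    rw [← Measure.volume_eq_prod]
    exact hint.mono_set hSsub
  set F : ℝ → ℝ × ℝ → ℝ := fun L p =>
    (Ioc (0:ℝ) L).indicator (fun t => G (t / L)) p.2 * dd p with hF_def
  set μS := ((volume : Measure ℝ).prod volume).restrict S with hμS_def
  have hFmeas : ∀ L : ℝ, AEStronglyMeasurable (F L) μS := by
    intro L
    have h1 : Measurable fun p : ℝ × ℝ => (Ioc (0:ℝ) L).indicator (fun t => G (t / L)) p.2 :=
      (((hGcont.comp (continuous_id.div_const L)).measurable).indicator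
        measurableSet_Ioc).comp measurable_snd
    exact h1.aestronglyMeasurable.mul hdS.aestronglyMeasurable
  have hFbound : ∀ L : ℝ, ∀ p : ℝ × ℝ, ‖F L p‖ ≤ M * |dd p| := by
    intro L p
    rw [Real.norm_eq_abs, hF_def]
    simp only
    rw [abs_mul]
    rcases em (p.2 ∈ Ioc (0:ℝ) L) with h | h
    · rw [indicator_of_mem h]
      exact mul_le_mul_of_nonneg_right (hGmem h) (abs_nonneg _)
    · rw [indicator_of_notMem h]
      simp only [abs_zero, zero_mul]
      positivity
  have hbound_int : Integrable (fun p : ℝ × ℝ => M * |dd p|) μS :=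
    (hdS.norm.const_mul M)
  have hFlim : ∀ᵐ p ∂μS, Tendsto (fun L : ℝ => F L p) atTop (nhds (dd p)) := by
    filter_upwards [ae_restrict_mem hSmeas] with p hp
    have hp2 : (0:ℝ) < p.2 := hp.2
    have h1 : Tendsto (fun L : ℝ => G (p.2 / L)) atTop (nhds 1) := by
      have h2 : Tendsto (fun L : ℝ => p.2 / L) atTop (nhds 0) :=
        tendsto_const_nhds.div_atTop tendsto_id
      have h3 := (hGcont.continuousAt (x := 0)).tendsto.comp h2
      rwa [hG0] at h3
    apply Tendsto.congr' _ (by simpa using h1.mul (tendsto_const_nhds (x := dd p)))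
    filter_upwards [eventually_ge_atTop p.2] with L hL
    simp only [hF_def]
    rw [indicator_of_mem (show p.2 ∈ Ioc (0:ℝ) L from ⟨hp2, hL⟩)]
  have hA : Tendsto (fun L : ℝ => ∫ p, F L p ∂μS) atTop (nhds (∫ p, dd p ∂μS)) :=
    tendsto_integral_filter_of_dominated_convergence _ (Eventually.of_forall hFmeas)
      (Eventually.of_forall fun L => Eventually.of_forall (hFbound L)) hbound_int hFlim
  -- identify the limit of the first part
  have hT1 : (∫ x₁ in (0:ℝ)..1, ∫ x₂ in Set.Ioi (0:ℝ), (k (x₁, x₂) - K (x₁, x₂)))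
      = ∫ p, dd p ∂μS := by
    have hsp := MeasureTheory.setIntegral_prod (μ := (volume : Measure ℝ))
      (ν := (volume : Measure ℝ)) dd hdS
    simp only [hdd_def] at hsp
    rw [intervalIntegral.integral_of_le zero_le_one, hμS_def, hS_def]
    exact hsp.symm
  -- integrability of the localized (k-K) integrand
  have hFL_int : ∀ L : ℝ, 0 < L → IntegrableOn (fun p : ℝ × ℝ => G (p.2 / L) * dd p)
      (Ioc 0 1 ×ˢ Ioc 0 L) ((volume : Measure ℝ).prod volume) := by
    intro L hL0
    have hRsub : (Ioc (0:ℝ) 1 ×ˢ Ioc (0:ℝ) L) ⊆ S :=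
      prod_mono (subset_refl _) Ioc_subset_Ioi_self
    have hdR := hdS.mono_set hRsub
    apply Integrable.mono' (hdR.norm.const_mul M)
    · exact ((hGcont.comp (continuous_snd.div_const L)).aestronglyMeasurable).mul
        hdR.aestronglyMeasurable
    · filter_upwards [ae_restrict_mem (measurableSet_Ioc.prod measurableSet_Ioc)] with p hp
      rw [Real.norm_eq_abs, abs_mul]
      exact mul_le_mul_of_nonneg_right (hGmem hp.2) (abs_nonneg _)
  -- the main eventual identity
  have hkey : ∀ᶠ L in (atTop : Filter ℝ),
      (∫ x₁ in (0:ℝ)..1, ∫ x₂ in (0:ℝ)..L, g (x₂ / L) * k (x₁, x₂))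
        = (∫ p, F L p ∂μS) + ∫ t in (0:ℝ)..L, G (t / L) * Q t := by
    filter_upwards [eventually_ge_atTop (1:ℝ)] with L hL
    have hL0 : (0:ℝ) < L := lt_of_lt_of_le one_pos hL
    -- inner splitting, for x₁ in the unit interval
    have hinner : ∀ x₁ ∈ Icc (0:ℝ) 1,
        (∫ x₂ in (0:ℝ)..L, g (x₂ / L) * k (x₁, x₂))
          = (∫ x₂ in Ioc (0:ℝ) L, G (x₂ / L) * dd (x₁, x₂))
            + ∫ x₂ in (0:ℝ)..L, G (x₂ / L) * K (x₁, x₂) := by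
      intro x₁ hx₁
      have hkx : ContinuousOn (fun x₂ => k (x₁, x₂)) (Ici 0) :=
        hk.comp (continuous_const.prodMk continuous_id).continuousOn
          (fun x₂ hx₂ => ⟨hx₁, hx₂⟩)
      have hGL : Continuous fun x₂ : ℝ => G (x₂ / L) :=
        hGcont.comp (continuous_id.div_const L)
      have hIk : IntervalIntegrable (fun x₂ => G (x₂ / L) * k (x₁, x₂)) volume 0 L := by
        apply ContinuousOn.intervalIntegrable
        rw [uIcc_of_le hL0.le]
        exact (hGL.continuousOn).mul (hkx.mono (Icc_subset_Ici_self))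
      have hIK : IntervalIntegrable (fun x₂ => G (x₂ / L) * K (x₁, x₂)) volume 0 L :=
        (hGL.mul (hK.comp (continuous_const.prodMk continuous_id))).intervalIntegrable 0 L
      have hId : IntervalIntegrable (fun x₂ => G (x₂ / L) * dd (x₁, x₂)) volume 0 L := by
        apply ContinuousOn.intervalIntegrable
        rw [uIcc_of_le hL0.le]
        exact (hGL.continuousOn).mul
          ((hkx.mono Icc_subset_Ici_self).sub
            ((hK.comp (continuous_const.prodMk continuous_id)).continuousOn))
      have e1 : (∫ x₂ in (0:ℝ)..L, g (x₂ / L) * k (x₁, x₂))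
          = ∫ x₂ in (0:ℝ)..L, (G (x₂ / L) * dd (x₁, x₂) + G (x₂ / L) * K (x₁, x₂)) := by
        apply intervalIntegral.integral_congr
        intro y hy
        rw [uIcc_of_le hL0.le] at hy
        have hy1 : y / L ∈ Icc (0:ℝ) 1 :=
          ⟨div_nonneg hy.1 hL0.le, (div_le_one hL0).mpr hy.2⟩
        simp only [hdd_def]
        rw [← hGeq hy1]
        ring
      rw [e1, intervalIntegral.integral_add hId hIK,
        intervalIntegral.integral_of_le hL0.le]
    -- outer splitting
    have hIdd_out : IntervalIntegrable
        (fun x₁ => ∫ x₂ in Ioc (0:ℝ) L, G (x₂ / L) * dd (x₁, x₂)) volume 0 1 := by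
      rw [intervalIntegrable_iff, uIoc_of_le zero_le_one]
      have h2 := hFL_int L hL0
      rw [IntegrableOn, ← Measure.prod_restrict] at h2
      exact h2.integral_prod_left
    have hIK_out : IntervalIntegrable
        (fun x₁ => ∫ x₂ in (0:ℝ)..L, G (x₂ / L) * K (x₁, x₂)) volume 0 1 := by
      apply Continuous.intervalIntegrable
      exact intervalIntegral.continuous_parametric_intervalIntegral_of_continuous'
        (f := fun x₁ t => G (t / L) * K (x₁, t))
        (((hGcont.comp (continuous_snd.div_const L))).mul
          (hK.comp (continuous_fst.prodMk continuous_snd))) 0 L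
    have hfirst : (∫ x₁ in (0:ℝ)..1, ∫ x₂ in Ioc (0:ℝ) L, G (x₂ / L) * dd (x₁, x₂))
        = ∫ p, F L p ∂μS := by
      have h2 := MeasureTheory.setIntegral_prod (μ := (volume : Measure ℝ))
        (ν := (volume : Measure ℝ)) (fun p : ℝ × ℝ => G (p.2 / L) * dd p) (hFL_int L hL0)
      simp only at h2
      rw [intervalIntegral.integral_of_le zero_le_one, ← h2]
      have hmeas1 : MeasurableSet (Ioc (0:ℝ) 1 ×ˢ Ioc (0:ℝ) L) :=
        measurableSet_Ioc.prod measurableSet_Ioc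
      have hmeas2 : MeasurableSet (Ioc (0:ℝ) 1 ×ˢ Ioi L) :=
        measurableSet_Ioc.prod measurableSet_Ioi
      have hEq1 : EqOn (F L) (fun p : ℝ × ℝ => G (p.2 / L) * dd p)
          (Ioc (0:ℝ) 1 ×ˢ Ioc (0:ℝ) L) := by
        intro p hp
        simp only [hF_def]
        rw [indicator_of_mem hp.2]
      have hEq2 : EqOn (F L) (fun _ => (0:ℝ)) (Ioc (0:ℝ) 1 ×ˢ Ioi L) := by
        intro p hp
        simp only [hF_def]
        rw [indicator_of_notMem (fun hmem => absurd hmem.2 (not_le.mpr hp.2))]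
        ring
      have hint1 : IntegrableOn (F L) (Ioc (0:ℝ) 1 ×ˢ Ioc (0:ℝ) L)
          ((volume : Measure ℝ).prod volume) :=
        (integrableOn_congr_fun hEq1 hmeas1).mpr (hFL_int L hL0)
      have hint2 : IntegrableOn (F L) (Ioc (0:ℝ) 1 ×ˢ Ioi L)
          ((volume : Measure ℝ).prod volume) :=
        (integrableOn_congr_fun hEq2 hmeas2).mpr (integrableOn_zero)
      have hunion : S = (Ioc (0:ℝ) 1 ×ˢ Ioc (0:ℝ) L) ∪ (Ioc (0:ℝ) 1 ×ˢ Ioi L) := by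
        rw [hS_def, ← Ioc_union_Ioi_eq_Ioi hL0.le, prod_union]
      have hdisj : Disjoint (Ioc (0:ℝ) 1 ×ˢ Ioc (0:ℝ) L) (Ioc (0:ℝ) 1 ×ˢ Ioi L) := by
        rw [Set.disjoint_left]
        rintro ⟨x, y⟩ hm hm'
        exact absurd hm.2.2 (not_le.mpr hm'.2)
      have hsplit : (∫ p, F L p ∂μS)
          = (∫ p in (Ioc (0:ℝ) 1 ×ˢ Ioc (0:ℝ) L), F L p ∂((volume : Measure ℝ).prod volume))
            + ∫ p in (Ioc (0:ℝ) 1 ×ˢ Ioi L), F L p ∂((volume : Measure ℝ).prod volume) := by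
        rw [hμS_def, hunion]
        exact setIntegral_union hdisj hmeas2 hint1 hint2
      rw [hsplit, setIntegral_congr_fun hmeas1 hEq1, setIntegral_congr_fun hmeas2 hEq2]
      simp
    calc (∫ x₁ in (0:ℝ)..1, ∫ x₂ in (0:ℝ)..L, g (x₂ / L) * k (x₁, x₂))
        = ∫ x₁ in (0:ℝ)..1, ((∫ x₂ in Ioc (0:ℝ) L, G (x₂ / L) * dd (x₁, x₂))
            + ∫ x₂ in (0:ℝ)..L, G (x₂ / L) * K (x₁, x₂)) := by
          apply intervalIntegral.integral_congr
          intro x hx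
          rw [uIcc_of_le zero_le_one] at hx
          exact hinner x hx
      _ = (∫ x₁ in (0:ℝ)..1, ∫ x₂ in Ioc (0:ℝ) L, G (x₂ / L) * dd (x₁, x₂))
            + ∫ x₁ in (0:ℝ)..1, ∫ x₂ in (0:ℝ)..L, G (x₂ / L) * K (x₁, x₂) :=
          intervalIntegral.integral_add hIdd_out hIK_out
      _ = (∫ p, F L p ∂μS) + ∫ t in (0:ℝ)..L, G (t / L) * Q t := by
          rw [hfirst, hKpart L hL0]
  -- conclusion
  have hB := edge_core hQc hQper hQavg hφc hGd hG0 hG1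
  rw [hT1, hT2, sub_eq_add_neg]
  exact Tendsto.congr' (EventuallyEq.symm hkey) (hA.add hB)
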